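/- (Hammersley–Clifford, factorization direction) Let p be a strictly positive probability distribution over finite discrete variables indexed by a finite set V, and let H be an undirected graph on V. If for every pair of non-adjacent vertices s, t of H we have X_s ⊥_p X_t | X_{V\{s,t\}}, then p factorizes as p(x) = Π_{K} ψ_K(x_K), where the product runs over the complete subsets K of H and each ψ_K is a strictly positive function depending only on the coordinates in K. -/
import Mathlib


open scoped Classical

/-- The marginal of a distribution `p` on the coordinates in `S`, evaluated at the
configuration `x` (i.e. the probability that the coordinates in `S` take the values
they take in `x`). -/
noncomputable def marginal {V : Type*} [Fintype V] {X : V → Type*} [∀ v, Fintype (X v)]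
    (p : (∀ v, X v) → ℝ) (S : Finset V) (x : ∀ v, X v) : ℝ :=
  ∑ y : ∀ v, X v, if ∀ v ∈ S, y v = x v then p y else 0

/-- Conditional independence `A ⊥_p B | S` of the sets of coordinates `A` and `B`
given `S`, expressed multiplicatively via marginals:
`p(a,b,s)·p(s) = p(a,s)·p(b,s)`. -/
def CondIndep {V : Type*} [Fintype V] {X : V → Type*} [∀ v, Fintype (X v)]
    (p : (∀ v, X v) → ℝ) (A B S : Finset V) : Prop :=
  ∀ x : ∀ v, X v,
    marginal p (A ∪ B ∪ S) x * marginal p S x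
      = marginal p (A ∪ S) x * marginal p (B ∪ S) x

section helpers

variable {V : Type*} [Fintype V] {X : V → Type*} [∀ v, Fintype (X v)]

lemma marginal_pos (p : (∀ v, X v) → ℝ) (hpos : ∀ x, 0 < p x) (S : Finset V)
    (x : ∀ v, X v) : 0 < marginal p S x := by
  refine Finset.sum_pos' (fun y _ => ?_) ⟨x, ?_, ?_⟩
  · split_ifs
    · exact (hpos y).le
    · exact le_rfl
  · exact Finset.mem_univ x
  · simpa using hpos x

lemma marginal_congr (p : (∀ v, X v) → ℝ) (S : Finset V) {x y : ∀ v, X v}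
    (h : ∀ v ∈ S, x v = y v) : marginal p S x = marginal p S y := by
  refine Finset.sum_congr rfl fun z _ => ?_
  by_cases hz : ∀ v ∈ S, z v = x v
  · rw [if_pos hz, if_pos fun v hv => (hz v hv).trans (h v hv)]
  · rw [if_neg hz, if_neg fun hz' => hz fun v hv => (hz' v hv).trans (h v hv).symm]

lemma marginal_univ (p : (∀ v, X v) → ℝ) (x : ∀ v, X v) :
    marginal p Finset.univ x = p x := by
  unfold marginal
  rw [Finset.sum_eq_single x]
  · exact if_pos fun v _ => rfl
  · intro y _ hy
    exact if_neg fun h => hy (funext fun v => h v (Finset.mem_univ v))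
  · intro h
    exact absurd (Finset.mem_univ x) h

/-- The four-point identity derived from pairwise conditional independence. -/
lemma fourpoint (p : (∀ v, X v) → ℝ) (hpos : ∀ x, 0 < p x) {s t : V} (hst : s ≠ t)
    (S : Finset V) (hSmem : ∀ v, v ∈ S ↔ (v ≠ s ∧ v ≠ t))
    (hci : CondIndep p {s} {t} S)
    (a b c d : ∀ v, X v)
    (hbase : ∀ v, v ≠ s → v ≠ t → a v = b v ∧ a v = c v ∧ a v = d v)
    (has : a s = b s) (hcs : c s = d s) (hat : a t = c t) (hbt : b t = d t) :
    p a * p d = p b * p c := by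
  have h1 : ({s} : Finset V) ∪ {t} ∪ S = Finset.univ := by
    ext v
    simp only [Finset.mem_union, Finset.mem_singleton, Finset.mem_univ, iff_true, hSmem]
    by_cases hv : v = s
    · exact Or.inl (Or.inl hv)
    · by_cases hv' : v = t
      · exact Or.inl (Or.inr hv')
      · exact Or.inr ⟨hv, hv'⟩
  have key : ∀ x, p x * marginal p S x
      = marginal p ({s} ∪ S) x * marginal p ({t} ∪ S) x := by
    intro x
    have h := hci x
    rwa [h1, marginal_univ] at h
  have hmem2 : ∀ u v : ∀ w, X w, (∀ w, w ≠ s → w ≠ t → u w = v w) →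
      marginal p S u = marginal p S v := by
    intro u v h
    refine marginal_congr p _ fun w hw => ?_
    rw [hSmem] at hw
    exact h w hw.1 hw.2
  have hmems : ∀ u v : ∀ w, X w, (∀ w, w ≠ t → u w = v w) →
      marginal p ({s} ∪ S) u = marginal p ({s} ∪ S) v := by
    intro u v h
    refine marginal_congr p _ fun w hw => ?_
    rcases Finset.mem_union.1 hw with hw | hw
    · rw [Finset.mem_singleton] at hw
      subst hw
      exact h _ hst
    · exact h w ((hSmem w).1 hw).2
  have hmemt : ∀ u v : ∀ w, X w, (∀ w, w ≠ s → u w = v w) →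
      marginal p ({t} ∪ S) u = marginal p ({t} ∪ S) v := by
    intro u v h
    refine marginal_congr p _ fun w hw => ?_
    rcases Finset.mem_union.1 hw with hw | hw
    · rw [Finset.mem_singleton] at hw
      subst hw
      exact h _ hst.symm
    · exact h w ((hSmem w).1 hw).1
  have hab : marginal p ({s} ∪ S) a = marginal p ({s} ∪ S) b :=
    hmems a b fun w hw => by
      by_cases hws : w = s
      · subst hws; exact has
      · exact (hbase w hws hw).1
  have hac : marginal p ({t} ∪ S) a = marginal p ({t} ∪ S) c :=
    hmemt a c fun w hw => by
      by_cases hwt : w = t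
      · subst hwt; exact hat
      · exact (hbase w hw hwt).2.1
  have hdc : marginal p ({s} ∪ S) d = marginal p ({s} ∪ S) c :=
    hmems d c fun w hw => by
      by_cases hws : w = s
      · subst hws; exact hcs.symm
      · exact ((hbase w hws hw).2.2).symm.trans (hbase w hws hw).2.1
  have hdb : marginal p ({t} ∪ S) d = marginal p ({t} ∪ S) b :=
    hmemt d b fun w hw => by
      by_cases hwt : w = t
      · subst hwt; exact hbt.symm
      · exact ((hbase w hw hwt).2.2).symm.trans (hbase w hw hwt).1
  have h2b : marginal p S b = marginal p S a :=
    (hmem2 a b fun w hws hwt => (hbase w hws hwt).1).symm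
  have h2c : marginal p S c = marginal p S a :=
    (hmem2 a c fun w hws hwt => (hbase w hws hwt).2.1).symm
  have h2d : marginal p S d = marginal p S a :=
    (hmem2 a d fun w hws hwt => (hbase w hws hwt).2.2).symm
  have hM : marginal p S a ≠ 0 := (marginal_pos p hpos _ a).ne'
  have e : (p a * marginal p S a) * (p d * marginal p S d)
      = (p b * marginal p S b) * (p c * marginal p S c) := by
    rw [key a, key d, key b, key c, hab, hac, hdc, hdb]; ring
  rw [h2b, h2c, h2d] at e
  exact mul_right_cancel₀ (mul_ne_zero hM hM) (by linear_combination e)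

end helpers

/-- Möbius inversion over the subset lattice. -/
lemma moebius {α : Type*} [DecidableEq α] (U : Finset α) (g : Finset α → ℝ) :
    ∑ K ∈ U.powerset, ∑ A ∈ K.powerset, (-1 : ℝ) ^ (K.card - A.card) * g A = g U := by
  have h1 : ∀ K ∈ U.powerset, ∑ A ∈ K.powerset, (-1 : ℝ) ^ (K.card - A.card) * g A
      = ∑ A ∈ U.powerset, if A ⊆ K then (-1 : ℝ) ^ (K.card - A.card) * g A else 0 := by
    intro K hK
    have hpw : K.powerset = U.powerset.filter (· ⊆ K) := by
      ext A
      simp only [Finset.mem_powerset, Finset.mem_filter]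
      exact ⟨fun h => ⟨h.trans (Finset.mem_powerset.1 hK), h⟩, fun h => h.2⟩
    rw [hpw, Finset.sum_filter]
  rw [Finset.sum_congr rfl h1, Finset.sum_comm]
  have h2 : ∀ A ∈ U.powerset,
      (∑ K ∈ U.powerset, if A ⊆ K then (-1 : ℝ) ^ (K.card - A.card) * g A else 0)
      = (if A = U then 1 else 0) * g A := by
    intro A hA
    have hAU : A ⊆ U := Finset.mem_powerset.1 hA
    rw [← Finset.sum_filter, ← Finset.sum_mul]
    congr 1
    have hbij : ∑ K ∈ U.powerset.filter (A ⊆ ·), (-1 : ℝ) ^ (K.card - A.card)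
        = ∑ B ∈ (U \ A).powerset, (-1 : ℝ) ^ B.card := by
      refine Finset.sum_nbij' (fun K => K \ A) (fun B => A ∪ B) ?_ ?_ ?_ ?_ ?_
      · intro K hK
        simp only [Finset.mem_filter, Finset.mem_powerset] at hK ⊢
        exact Finset.sdiff_subset_sdiff hK.1 le_rfl
      · intro B hB
        simp only [Finset.mem_filter, Finset.mem_powerset] at hB ⊢
        exact ⟨Finset.union_subset hAU (hB.trans Finset.sdiff_subset),
          Finset.subset_union_left⟩
      · intro K hK
        simp only [Finset.mem_filter, Finset.mem_powerset] at hK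
        exact Finset.union_sdiff_of_subset hK.2
      · intro B hB
        simp only [Finset.mem_powerset] at hB
        have hdisj : Disjoint A B :=
          (Finset.disjoint_sdiff.mono_right hB)
        show (A ∪ B) \ A = B
        exact Finset.union_sdiff_cancel_left hdisj
      · intro K hK
        simp only [Finset.mem_filter, Finset.mem_powerset] at hK
        show (-1 : ℝ) ^ (K.card - A.card) = (-1 : ℝ) ^ (K \ A).card
        rw [Finset.card_sdiff_of_subset hK.2]
    rw [hbij]
    have hcast : ((∑ B ∈ (U \ A).powerset, (-1 : ℤ) ^ B.card : ℤ) : ℝ)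
        = ∑ B ∈ (U \ A).powerset, (-1 : ℝ) ^ B.card := by push_cast; rfl
    rw [← hcast, Finset.sum_powerset_neg_one_pow_card]
    by_cases hA' : A = U
    · simp [hA']
    · rw [if_neg fun h => hA' (Finset.Subset.antisymm hAU
        (Finset.sdiff_eq_empty_iff_subset.1 h)), if_neg hA']
      simp
  rw [Finset.sum_congr rfl h2]
  have h3 : ∀ A ∈ U.powerset, (if A = U then (1:ℝ) else 0) * g A
      = if A = U then g A else 0 := by
    intro A _
    split_ifs <;> ring
  rw [Finset.sum_congr rfl h3, Finset.sum_ite_eq' U.powerset U g,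
    if_pos (Finset.mem_powerset_self U)]

/-- Hammersley–Clifford, factorization direction: if a strictly
positive distribution `p` satisfies the pairwise Markov property wrt an undirected
graph `H` (every pair of non-adjacent vertices is conditionally independent given
all the rest), then `p(x) = Π_K ψ_K(x_K)`, the product running over the complete
subsets `K` of `H`, with each `ψ_K` strictly positive and depending only on the
coordinates in `K`. -/
theorem stmt6 {V : Type*} [Fintype V] [DecidableEq V] {X : V → Type*}
    [∀ v, Fintype (X v)]
    (p : (∀ v, X v) → ℝ) (hpos : ∀ x, 0 < p x) (hsum : ∑ x, p x = 1)
    (H : SimpleGraph V)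
    (hpairwise : ∀ s t : V, s ≠ t → ¬ H.Adj s t →
      CondIndep p {s} {t} (Finset.univ \ {s, t})) :
    ∃ ψ : Finset V → ((∀ v, X v) → ℝ),
      (∀ K x, 0 < ψ K x) ∧
      (∀ K (x y : ∀ v, X v), (∀ v ∈ K, x v = y v) → ψ K x = ψ K y) ∧
      (∀ x, p x =
        ∏ K ∈ (Finset.univ : Finset V).powerset.filter
            (fun K => ∀ s ∈ K, ∀ t ∈ K, s ≠ t → H.Adj s t),
          ψ K x) := by
  have hne : Nonempty (∀ v, X v) := by
    by_contra h
    rw [not_nonempty_iff] at h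
    haveI := h
    rw [Finset.univ_eq_empty, Finset.sum_empty] at hsum
    exact one_ne_zero hsum.symm
  obtain ⟨z⟩ := hne
  refine ⟨fun K x => Real.exp (∑ A ∈ K.powerset, (-1 : ℝ) ^ (K.card - A.card) *
      Real.log (p (fun v => if v ∈ A then x v else z v))),
    fun K x => Real.exp_pos _, ?_, ?_⟩
  · -- locality
    intro K x y hxy
    refine congrArg Real.exp (Finset.sum_congr rfl fun A hA => ?_)
    have hc : (fun v => if v ∈ A then x v else z v)
        = (fun v => if v ∈ A then y v else z v) := by
      funext v
      split_ifs with hv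
      · exact hxy v (Finset.mem_powerset.1 hA hv)
      · rfl
    rw [hc]
  · intro x
    -- the vanishing of non-complete potentials
    have hzero : ∀ K, K ⊆ Finset.univ →
        ¬ (∀ s ∈ K, ∀ t ∈ K, s ≠ t → H.Adj s t) →
        (∑ A ∈ K.powerset, (-1 : ℝ) ^ (K.card - A.card) *
          Real.log (p (fun v => if v ∈ A then x v else z v))) = 0 := by
      intro K _ hK
      push_neg at hK
      obtain ⟨s, hs, t, ht, hst, hadj⟩ := hK
      have hSmem : ∀ v, v ∈ (Finset.univ \ {s, t} : Finset V) ↔ (v ≠ s ∧ v ≠ t) := by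
        intro v
        simp [Finset.mem_sdiff, not_or]
      have hci := hpairwise s t hst hadj
      have hts : t ∈ K.erase s := Finset.mem_erase.2 ⟨hst.symm, ht⟩
      set K' := (K.erase s).erase t with hK'
      have hKeq : K = insert s (insert t K') := by
        rw [hK', Finset.insert_erase hts, Finset.insert_erase hs]
      have htK' : t ∉ K' := Finset.notMem_erase t _
      have hsK' : s ∉ insert t K' := by
        simp only [Finset.mem_insert]
        rintro (h | h)
        · exact hst h
        · exact (Finset.mem_erase.1 (Finset.mem_erase.1 h).2).1 rfl
      rw [hKeq, Finset.card_insert_of_notMem hsK', Finset.card_insert_of_notMem htK',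
        Finset.sum_powerset_insert hsK', Finset.sum_powerset_insert htK',
        Finset.sum_powerset_insert htK', ← Finset.sum_add_distrib,
        ← Finset.sum_add_distrib, ← Finset.sum_add_distrib]
      apply Finset.sum_eq_zero
      intro A hA
      have hAK' : A ⊆ K' := Finset.mem_powerset.1 hA
      have htA : t ∉ A := fun h => htK' (hAK' h)
      have hsA : s ∉ A := fun h => hsK' (Finset.mem_insert_of_mem (hAK' h))
      have hstA : s ∉ insert t A := by
        simp only [Finset.mem_insert]
        rintro (h | h)
        · exact hst h
        · exact hsA h
      have hAle : A.card ≤ K'.card := Finset.card_le_card hAK'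
      rw [Finset.card_insert_of_notMem htA, Finset.card_insert_of_notMem hsA,
        Finset.card_insert_of_notMem hstA, Finset.card_insert_of_notMem htA]
      have e0 : K'.card + 1 + 1 - A.card = (K'.card - A.card) + 2 := by omega
      have e1 : K'.card + 1 + 1 - (A.card + 1) = (K'.card - A.card) + 1 := by omega
      have e2 : K'.card + 1 + 1 - (A.card + 1 + 1) = K'.card - A.card := by omega
      rw [e0, e1, e2]
      -- the four-point identity
      have hpq : p (fun v => if v ∈ insert s (insert t A) then x v else z v)
            * p (fun v => if v ∈ A then x v else z v)
          = p (fun v => if v ∈ insert s A then x v else z v)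
            * p (fun v => if v ∈ insert t A then x v else z v) := by
        refine fourpoint p hpos hst _ hSmem hci _ _ _ _ ?_ ?_ ?_ ?_ ?_
        · intro v hvs hvt
          refine ⟨?_, ?_, ?_⟩ <;> simp [Finset.mem_insert, hvs, hvt]
        · simp [Finset.mem_insert]
        · simp [Finset.mem_insert, hst, hsA]
        · simp [Finset.mem_insert]
        · simp [Finset.mem_insert, hst.symm, htA]
      have hflog : Real.log (p (fun v => if v ∈ insert s (insert t A) then x v else z v))
            + Real.log (p (fun v => if v ∈ A then x v else z v))
          = Real.log (p (fun v => if v ∈ insert s A then x v else z v))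
            + Real.log (p (fun v => if v ∈ insert t A then x v else z v)) := by
        rw [← Real.log_mul (hpos _).ne' (hpos _).ne',
          ← Real.log_mul (hpos _).ne' (hpos _).ne', hpq]
      have hm2 : (-1 : ℝ) ^ (K'.card - A.card + 2) = (-1) ^ (K'.card - A.card) := by
        ring
      have hm1 : (-1 : ℝ) ^ (K'.card - A.card + 1) = -(-1) ^ (K'.card - A.card) := by
        ring
      rw [hm2, hm1]
      linear_combination ((-1 : ℝ) ^ (K'.card - A.card)) * hflog
    -- Möbius inversion
    have hmu : (∑ K ∈ (Finset.univ : Finset V).powerset, ∑ A ∈ K.powerset,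
          (-1 : ℝ) ^ (K.card - A.card) *
            Real.log (p (fun v => if v ∈ A then x v else z v)))
        = Real.log (p x) := by
      have h := moebius (Finset.univ : Finset V)
        (fun A => Real.log (p (fun v => if v ∈ A then x v else z v)))
      simpa using h
    have hall : ∏ K ∈ (Finset.univ : Finset V).powerset,
        Real.exp (∑ A ∈ K.powerset, (-1 : ℝ) ^ (K.card - A.card) *
          Real.log (p (fun v => if v ∈ A then x v else z v))) = p x := by
      rw [← Real.exp_sum, hmu, Real.exp_log (hpos x)]
    have hsplit := Finset.prod_filter_mul_prod_filter_not
      (Finset.univ : Finset V).powerset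
      (fun K => ∀ s ∈ K, ∀ t ∈ K, s ≠ t → H.Adj s t)
      (fun K => Real.exp (∑ A ∈ K.powerset, (-1 : ℝ) ^ (K.card - A.card) *
          Real.log (p (fun v => if v ∈ A then x v else z v))))
    have hone : ∏ K ∈ (Finset.univ : Finset V).powerset.filter
        (fun K => ¬ ∀ s ∈ K, ∀ t ∈ K, s ≠ t → H.Adj s t),
        Real.exp (∑ A ∈ K.powerset, (-1 : ℝ) ^ (K.card - A.card) *
          Real.log (p (fun v => if v ∈ A then x v else z v))) = 1 := by
      refine Finset.prod_eq_one fun K hK => ?_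
      rw [Finset.mem_filter] at hK
      rw [hzero K (Finset.mem_powerset.1 hK.1) hK.2, Real.exp_zero]
    rw [← hall, ← hsplit, hone, mul_one]
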